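/- arXiv:1612.04349 — 9 statements merged into one kernel-verified Lean document; each statement's English description precedes it below -/
import Mathlib

section
/- If A, B, C are three n×n cyclic Hankel matrices (i.e., real matrices whose (i,j) entry depends only on i+j mod n), then ABC = CBA. -/
/-- An `n × n` real matrix is cyclic Hankel if its `(i,j)` entry depends only on
`i + j` modulo `n` (addition in `Fin n`). -/
def IsCyclicHankel {n : ℕ} (M : Matrix (Fin n) (Fin n) ℝ) : Prop :=
  ∀ i j i' j' : Fin n, i + j = i' + j' → M i j = M i' j'

/-- If `A`, `B`, `C` are three `n × n` cyclic Hankel matrices, then `A * B * C = C * B * A`. -/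
theorem cyclicHankel_mul_mul_comm {n : ℕ} (A B C : Matrix (Fin n) (Fin n) ℝ)
    (hA : IsCyclicHankel A) (hB : IsCyclicHankel B) (hC : IsCyclicHankel C) :
    A * B * C = C * B * A := by
  rcases n with _ | m
  · ext i j; exact i.elim0
  ext i j
  simp only [Matrix.mul_apply, Finset.sum_mul]
  rw [← Finset.sum_product', ← Finset.sum_product']
  refine Fintype.sum_equiv
    ⟨fun p => (i + p.2 - j, p.1 + j - i), fun p => (i + p.2 - j, p.1 + j - i),
      fun p => by ext <;> simp, fun p => by ext <;> simp⟩
    _ _ (fun p => ?_)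
  simp only [Equiv.coe_fn_mk]
  have h1 : A i p.2 = A (i + p.2 - j) j := hA _ _ _ _ (by abel)
  have h2 : B p.2 p.1 = B (p.1 + j - i) (i + p.2 - j) := hB _ _ _ _ (by abel)
  have h3 : C p.1 j = C i (p.1 + j - i) := hC _ _ _ _ (by abel)
  rw [h1, h2, h3]
  ring
end

section
/- The product of an odd number of cyclic Hankel n×n matrices is again a cyclic Hankel matrix; in particular, for cyclic Hankel A, B, C the product ABC is cyclic Hankel and hence symmetric. -/
open Matrix

def IsCyclicToeplitz {n : ℕ} (M : Matrix (Fin n) (Fin n) ℝ) : Prop :=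
  ∀ i j i' j' : Fin n, i + j' = i' + j → M i j = M i' j'

lemma one_toep {n : ℕ} [NeZero n] : IsCyclicToeplitz (1 : Matrix (Fin n) (Fin n) ℝ) := by
  intro i j i' j' h
  have hd : i - j = i' - j' := by open Fin.CommRing in linear_combination h
  simp only [one_apply]
  by_cases e : i = j
  · have : i' = j' := by
      rw [e, sub_self] at hd; exact (sub_eq_zero.mp hd.symm)
    simp [e, this]
  · have : ¬ i' = j' := fun e' => e (by
      rw [e', sub_self] at hd; exact sub_eq_zero.mp hd)
    simp [e, this]

lemma mulHH {n : ℕ} [NeZero n] {A B : Matrix (Fin n) (Fin n) ℝ}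
    (hA : IsCyclicHankel A) (hB : IsCyclicHankel B) : IsCyclicToeplitz (A * B) := by
  intro i j i' j' h
  simp only [mul_apply]
  apply Fintype.sum_equiv (Equiv.subRight (i' - i))
  intro k
  have e1 : A i k = A i' (k - (i' - i)) := hA _ _ _ _ (by open Fin.CommRing in ring)
  have e2 : B k j = B (k - (i' - i)) j' := hB _ _ _ _ (by open Fin.CommRing in linear_combination -h)
  simp [Equiv.subRight, ← e1, ← e2]

lemma mulHT {n : ℕ} [NeZero n] {A T : Matrix (Fin n) (Fin n) ℝ}
    (hA : IsCyclicHankel A) (hT : IsCyclicToeplitz T) : IsCyclicHankel (A * T) := by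
  intro i j i' j' h
  simp only [mul_apply]
  apply Fintype.sum_equiv (Equiv.subRight (i' - i))
  intro k
  have e1 : A i k = A i' (k - (i' - i)) := hA _ _ _ _ (by open Fin.CommRing in ring)
  have e2 : T k j = T (k - (i' - i)) j' := hT _ _ _ _ (by open Fin.CommRing in linear_combination -h)
  simp [Equiv.subRight, ← e1, ← e2]

lemma key {n : ℕ} [NeZero n] : ∀ L : List (Matrix (Fin n) (Fin n) ℝ),
    (∀ M ∈ L, IsCyclicHankel M) →
    (Odd L.length → IsCyclicHankel L.prod) ∧ (Even L.length → IsCyclicToeplitz L.prod) := by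
  intro L
  induction L with
  | nil =>
    intro _
    refine ⟨fun h => by simp at h, fun _ => by simpa using one_toep⟩
  | cons A L ih =>
    intro h
    have hA : IsCyclicHankel A := h A (by simp)
    have ihL := ih (fun M hM => h M (by simp [hM]))
    constructor
    · intro hodd
      have : Even L.length := by
        simpa [Nat.even_add_one] using (Nat.odd_add_one.mp (by simpa using hodd))
      simpa using mulHT hA (ihL.2 this)
    · intro heven
      have : Odd L.length := by
        rcases Nat.even_add_one.mp (by simpa using heven) with h'
        exact Nat.not_even_iff_odd.mp h'
      simpa using mulHH hA (ihL.1 this)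

/-- The product of an odd number of cyclic Hankel matrices is cyclic Hankel;
in particular, for cyclic Hankel `A`, `B`, `C` the product `A * B * C` is cyclic
Hankel and hence symmetric. -/
theorem odd_prod_cyclicHankel {n : ℕ} :
    (∀ L : List (Matrix (Fin n) (Fin n) ℝ), (∀ M ∈ L, IsCyclicHankel M) →
      Odd L.length → IsCyclicHankel L.prod) ∧
    (∀ A B C : Matrix (Fin n) (Fin n) ℝ,
      IsCyclicHankel A → IsCyclicHankel B → IsCyclicHankel C →
      IsCyclicHankel (A * B * C) ∧ (A * B * C)ᵀ = A * B * C) := by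
  rcases Nat.eq_zero_or_pos n with rfl | hn
  · constructor
    · intro L _ _ i; exact i.elim0
    · intro A B C _ _ _
      refine ⟨fun i => i.elim0, ?_⟩
      ext i j; exact i.elim0
  · have : NeZero n := ⟨hn.ne'⟩
    refine ⟨fun L h hodd => (key L h).1 hodd, fun A B C hA hB hC => ?_⟩
    have hH : IsCyclicHankel (A * B * C) := by
      rw [mul_assoc]
      exact mulHT hA (mulHH hB hC)
    refine ⟨hH, ?_⟩
    ext i j
    exact hH j i i j (add_comm j i)
end

section
/- Let X(u) denote the n×n cyclic Hankel matrix with first column u ∈ ℝ^n, i.e., X(u)_{i,j} = u_{i+j−1 mod n}. Then the 2n×2n matrix J(x) with block form [[0, X(u)], [−X(u), 0]], where x = (u,v), defines a Poisson bracket on ℝ^{2n}: the bracket {x_i, x_j} = J(x)_{ij} satisfies the Jacobi identity. -/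
open Matrix

/-- The cyclic Hankel matrix with first column `u`: `X(u) i j = u (i + j)` (indices mod `n`). -/
def cycHankel {n : ℕ} (u : Fin n → ℝ) : Matrix (Fin n) (Fin n) ℝ :=
  Matrix.of fun i j => u (i + j)

/-- The Lie-Poisson tensor `J(x) = [[0, X(u)], [-X(u), 0]]` on `ℝ^{2n}`, where
`u` is the first half of the coordinates of `x`. -/
def LPtensor {n : ℕ} (x : Fin n ⊕ Fin n → ℝ) :
    Matrix (Fin n ⊕ Fin n) (Fin n ⊕ Fin n) ℝ :=
  Matrix.fromBlocks 0 (cycHankel (x ∘ Sum.inl)) (-(cycHankel (x ∘ Sum.inl))) 0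

/-- `J(x)` defines a Poisson bracket on `ℝ^{2n}`: the Jacobi identity holds.
Since the entries of `J` are linear in `x`, the partial derivative
`∂J_{jk}/∂x_m` equals `J(e_m)_{jk}`, and the Jacobi identity reads
`Σ_m J(e_m)_{jk} J(x)_{im} + cyclic = 0`. -/
theorem LPtensor_jacobi {n : ℕ} (x : Fin n ⊕ Fin n → ℝ) (i j k : Fin n ⊕ Fin n) :
    (∑ m : Fin n ⊕ Fin n, LPtensor (Pi.single m 1) j k * LPtensor x i m)
    + (∑ m : Fin n ⊕ Fin n, LPtensor (Pi.single m 1) k i * LPtensor x j m)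
    + (∑ m : Fin n ⊕ Fin n, LPtensor (Pi.single m 1) i j * LPtensor x k m) = 0 := by
  rcases i with a|a <;> rcases j with p|p <;> rcases k with q|q <;>
    simp [LPtensor, cycHankel, Matrix.fromBlocks, Fintype.sum_sum_type, Pi.single_apply,
      Function.comp, Finset.sum_ite_eq, add_comm, add_assoc, add_left_comm]
end

section
/- Let J(x) be a Poisson tensor on ℝ^N and A a constant N×N matrix with A^T J(x) = J(x) A for all x. If functions H_0, …, H_{n−1} satisfy ∇H_i = A ∇H_{i−1} for i = 1,…,n−1, then the H_i are pairwise in involution: (∇H_i)^T J(x) ∇H_j = 0 for all i, j. -/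
open Matrix

/-- A skew-symmetric quadratic form vanishes. -/
lemma skew_quad_zero {N : ℕ} (M : Matrix (Fin N) (Fin N) ℝ) (v : Fin N → ℝ)
    (h : Mᵀ = -M) : v ⬝ᵥ M.mulVec v = 0 := by
  have h1 : v ⬝ᵥ M.mulVec v = Mᵀ.mulVec v ⬝ᵥ v := by
    rw [Matrix.dotProduct_mulVec, Matrix.mulVec_transpose]
  have h2 : v ⬝ᵥ M.mulVec v = -(M.mulVec v ⬝ᵥ v) := by
    rw [h1, h, Matrix.neg_mulVec, neg_dotProduct]
  have h3 := dotProduct_comm (M.mulVec v) v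
  linarith

/-- Let `J(x)` be a Poisson tensor on `ℝ^N` (skew-symmetric matrices) and `A` a
constant matrix with `Aᵀ J(x) = J(x) A` for all `x`. If the gradients
`g i = ∇H_i` of functions `H_0, …, H_{m-1}` satisfy `∇H_i = A ∇H_{i-1}`, then
the `H_i` are pairwise in involution: `(∇H_i)ᵀ J(x) ∇H_j = 0`. -/
theorem involution_of_grad_recursion {N m : ℕ}
    (J : (Fin N → ℝ) → Matrix (Fin N) (Fin N) ℝ)
    (hJskew : ∀ x, (J x)ᵀ = -(J x))
    (A : Matrix (Fin N) (Fin N) ℝ)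
    (hA : ∀ x, Aᵀ * J x = J x * A)
    (H : Fin m → (Fin N → ℝ) → ℝ)
    (g : Fin m → (Fin N → ℝ) → (Fin N → ℝ))
    (hdiff : ∀ i x, DifferentiableAt ℝ (H i) x)
    (hgrad : ∀ i x j, fderiv ℝ (H i) x (Pi.single j 1) = g i x j)
    (hrec : ∀ i : Fin m, ∀ h : (i : ℕ) + 1 < m, ∀ x,
      g ⟨(i : ℕ) + 1, h⟩ x = A.mulVec (g i x)) :
    ∀ i j : Fin m, ∀ x, (g i x) ⬝ᵥ (J x).mulVec (g j x) = 0 := by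
  intro i j x
  -- commutation of powers with J
  have hcomm : ∀ k : ℕ, (A ^ k)ᵀ * J x = J x * A ^ k := by
    intro k
    induction k with
    | zero => simp
    | succ k ih =>
      rw [pow_succ, Matrix.transpose_mul, mul_assoc, ih, ← mul_assoc, hA x,
        mul_assoc, pow_mul_comm']
  -- g i = A^i g 0
  have hm : 0 < m := i.pos
  have key : ∀ k (hk : k < m), g ⟨k, hk⟩ x = (A ^ k).mulVec (g ⟨0, hm⟩ x) := by
    intro k
    induction k with
    | zero => intro hk; simp
    | succ k ih =>
      intro hk
      have hk' : k < m := Nat.lt_of_succ_lt hk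
      have := hrec ⟨k, hk'⟩ hk x
      rw [this, ih hk', Matrix.mulVec_mulVec, ← pow_succ']
  set v := g ⟨0, hm⟩ x with hv
  have hi : g i x = (A ^ (i : ℕ)).mulVec v := by
    have := key i.1 i.2; simpa using this
  have hj : g j x = (A ^ (j : ℕ)).mulVec v := by
    have := key j.1 j.2; simpa using this
  rw [hi, hj]
  have hstep : (A ^ (i : ℕ)).mulVec v ⬝ᵥ (J x).mulVec ((A ^ (j : ℕ)).mulVec v)
      = v ⬝ᵥ (J x * A ^ ((i : ℕ) + (j : ℕ))).mulVec v := by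
    rw [Matrix.mulVec_mulVec, ← Matrix.vecMul_transpose, ← Matrix.dotProduct_mulVec,
      Matrix.mulVec_mulVec, ← mul_assoc, hcomm, mul_assoc, ← pow_add]
  rw [hstep]
  apply skew_quad_zero
  rw [Matrix.transpose_mul, hJskew, Matrix.mul_neg, ← Matrix.neg_mul, ← hcomm,
    Matrix.neg_mul]
end

section
/- Let J(x) = [[0, X(u)], [−X(u), 0]] be the 2n×2n Lie-Poisson tensor with X(u) the cyclic Hankel matrix of u, x = (u,v). Then a constant 2n×2n matrix A satisfies A^T J(x) = J(x) A for all x ∈ ℝ^{2n} if and only if A is block diagonal A = 𝒜 ⊕ 𝒜 with 𝒜 an n×n circulant matrix. -/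
open Matrix

/-- An `n × n` matrix is circulant if `M_{i,j}` depends only on `j - i` mod `n`. -/
def IsCirculant {n : ℕ} (M : Matrix (Fin n) (Fin n) ℝ) : Prop :=
  ∀ i j i' j' : Fin n, j - i = j' - i' → M i j = M i' j'

lemma sum_delta {n : ℕ} [NeZero n] (f : Fin n → ℝ) (j m : Fin n) :
    (∑ k, (if k + j = m then f k else 0)) = f (m - j) := by
  have h : ∀ k : Fin n, (k + j = m) = (k = m - j) := by
    intro k; rw [eq_iff_iff, eq_sub_iff_add_eq]
  simp_rw [h]
  simp [Finset.sum_ite_eq']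

lemma sum_delta' {n : ℕ} [NeZero n] (f : Fin n → ℝ) (i m : Fin n) :
    (∑ k, (if i + k = m then f k else 0)) = f (m - i) := by
  have h : ∀ k : Fin n, (i + k = m) = (k = m - i) := by
    intro k; rw [eq_iff_iff]
    constructor
    · intro h; rw [← h]; abel
    · intro h; rw [h]; abel
  simp_rw [h]
  simp [Finset.sum_ite_eq']

/-- A constant `2n × 2n` matrix `A` satisfies `Aᵀ J(x) = J(x) A` for all `x` iff
`A = 𝒜 ⊕ 𝒜` is block diagonal with `𝒜` circulant. -/
theorem LPtensor_commutant {n : ℕ}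
    (A : Matrix (Fin n ⊕ Fin n) (Fin n ⊕ Fin n) ℝ) :
    (∀ x, Aᵀ * LPtensor x = LPtensor x * A) ↔
    (∃ 𝒜 : Matrix (Fin n) (Fin n) ℝ, IsCirculant 𝒜 ∧
      A = Matrix.fromBlocks 𝒜 0 0 𝒜) := by
  rcases eq_or_ne n 0 with rfl | hn
  · constructor
    · intro _
      refine ⟨0, fun i => i.elim0, ?_⟩
      ext a b
      cases a with
      | inl a => exact a.elim0
      | inr a => exact a.elim0
    · intro _ x
      ext a b
      cases a with
      | inl a => exact a.elim0
      | inr a => exact a.elim0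
  · haveI : NeZero n := ⟨hn⟩
    constructor
    · intro h
      -- extract entrywise equations with delta inputs
      set x : Fin n → Fin n ⊕ Fin n → ℝ :=
        fun m => Sum.elim (fun t => if t = m then (1:ℝ) else 0) 0 with hx
      have E1 : ∀ m i j : Fin n,
          A (Sum.inl (m - j)) (Sum.inl i) = A (Sum.inr (m - i)) (Sum.inr j) := by
        intro m i j
        have := congrFun (congrFun (h (x m)) (Sum.inl i)) (Sum.inr j)
        simpa [Matrix.mul_apply, LPtensor, cycHankel, Matrix.fromBlocks,
          Fintype.sum_sum_type, hx, sum_delta, sum_delta'] using this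
      have E2 : ∀ m i j : Fin n,
          -A (Sum.inr (m - j)) (Sum.inl i) = A (Sum.inr (m - i)) (Sum.inl j) := by
        intro m i j
        have := congrFun (congrFun (h (x m)) (Sum.inl i)) (Sum.inl j)
        simpa [Matrix.mul_apply, LPtensor, cycHankel, Matrix.fromBlocks,
          Fintype.sum_sum_type, hx, sum_delta, sum_delta'] using this
      have E3 : ∀ m i j : Fin n,
          A (Sum.inl (m - j)) (Sum.inr i) = -A (Sum.inl (m - i)) (Sum.inr j) := by
        intro m i j
        have := congrFun (congrFun (h (x m)) (Sum.inr i)) (Sum.inr j)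
        simpa [Matrix.mul_apply, LPtensor, cycHankel, Matrix.fromBlocks,
          Fintype.sum_sum_type, hx, sum_delta, sum_delta'] using this
      have hQ : ∀ a b : Fin n, A (Sum.inl a) (Sum.inr b) = 0 := by
        intro a b
        have := E3 (a + b) b b
        rw [add_sub_cancel_right] at this
        linarith
      have hR : ∀ a b : Fin n, A (Sum.inr a) (Sum.inl b) = 0 := by
        intro a b
        have := E2 (a + b) b b
        rw [add_sub_cancel_right] at this
        linarith
      have hS : ∀ a b : Fin n, A (Sum.inr a) (Sum.inr b) = A (Sum.inl a) (Sum.inl b) := by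
        intro a b
        have := E1 (a + b) b b
        rw [add_sub_cancel_right] at this
        exact this.symm
      have E1' : ∀ m a b : Fin n,
          A (Sum.inl (m - b)) (Sum.inl a) = A (Sum.inl (m - a)) (Sum.inl b) := by
        intro m a b
        rw [E1 m a b, hS]
      refine ⟨Matrix.of fun i j => A (Sum.inl i) (Sum.inl j), ?_, ?_⟩
      · intro i j i' j' hd
        have key : A (Sum.inl i) (Sum.inl j) = A (Sum.inl (i' + j - j)) (Sum.inl (i' + j - i)) := by
          have := E1' (i' + j) j (i' + j - i)
          rw [sub_sub_cancel] at this
          exact this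
        have h1 : i' + j - j = i' := add_sub_cancel_right i' j
        have h2 : i' + j - i = j' := by
          rw [add_sub_assoc, hd]
          abel
        simpa [h1, h2] using key
      · ext a b
        cases a with
        | inl a =>
          cases b with
          | inl b => simp [Matrix.fromBlocks]
          | inr b => simp [Matrix.fromBlocks, hQ]
        | inr a =>
          cases b with
          | inl b => simp [Matrix.fromBlocks, hR]
          | inr b => simp [Matrix.fromBlocks, hS]
    · rintro ⟨𝒜, hc, rfl⟩
      intro x
      set u : Fin n → ℝ := x ∘ Sum.inl with hu
      have key : 𝒜ᵀ * cycHankel u = cycHankel u * 𝒜 := by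
        ext i j
        rw [Matrix.mul_apply, Matrix.mul_apply]
        simp only [cycHankel, Matrix.of_apply, Matrix.transpose_apply]
        refine Fintype.sum_equiv (Equiv.addRight (j - i)) _ _ ?_
        intro k
        simp only [Equiv.coe_addRight]
        rw [show i + (k + (j - i)) = k + j from by abel,
          hc k i (k + (j - i)) j (by abel), mul_comm]
      rw [LPtensor, Matrix.fromBlocks_transpose, Matrix.fromBlocks_multiply,
        Matrix.fromBlocks_multiply]
      rw [← hu]
      simp [key]
end

section
/- Let A = P ⊕ P where P is the n×n cyclic shift matrix. A quadratic form H(x) = (1/2) x^T M x on ℝ^{2n} with symmetric matrix M satisfies A M = M A^T if and only if M has block form [[H1, H2],[H2, H3]] with H1, H2, H3 cyclic Hankel n×n matrices. The space of such M has dimension 3n. -/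
open Matrix

/-- The `n × n` cyclic shift matrix. -/
def cyclicShift (n : ℕ) [NeZero n] : Matrix (Fin n) (Fin n) ℝ :=
  Matrix.of fun i j => if j = i + 1 then (1 : ℝ) else 0

/-- `A = P ⊕ P` with `P` the cyclic shift matrix. -/
def shiftBlock (n : ℕ) [NeZero n] : Matrix (Fin n ⊕ Fin n) (Fin n ⊕ Fin n) ℝ :=
  Matrix.fromBlocks (cyclicShift n) 0 0 (cyclicShift n)

/-- The space of symmetric `2n × 2n` matrices `M` with `A M = M Aᵀ`, `A = P ⊕ P`. -/
def hessSpace (n : ℕ) [NeZero n] : Submodule ℝ (Matrix (Fin n ⊕ Fin n) (Fin n ⊕ Fin n) ℝ) where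
  carrier := {M | Mᵀ = M ∧ shiftBlock n * M = M * (shiftBlock n)ᵀ}
  add_mem' := by
    rintro a b ⟨ha1, ha2⟩ ⟨hb1, hb2⟩
    exact ⟨by rw [transpose_add, ha1, hb1], by rw [mul_add, add_mul, ha2, hb2]⟩
  zero_mem' := by simp
  smul_mem' := by
    rintro c a ⟨ha1, ha2⟩
    exact ⟨by rw [transpose_smul, ha1], by rw [mul_smul_comm, smul_mul_assoc, ha2]⟩

set_option linter.unusedSectionVars false

open scoped Fin.NatCast Fin.CommRing

section Aux
variable {n : ℕ} [NeZero n]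

lemma shift_mul (N : Matrix (Fin n) (Fin n) ℝ) (i j : Fin n) :
    (cyclicShift n * N) i j = N (i + 1) j := by
  simp [cyclicShift, mul_apply]

lemma mul_shiftT (N : Matrix (Fin n) (Fin n) ℝ) (i j : Fin n) :
    (N * (cyclicShift n)ᵀ) i j = N i (j + 1) := by
  simp [cyclicShift, mul_apply]

lemma rel_shift {N : Matrix (Fin n) (Fin n) ℝ}
    (h : ∀ i j : Fin n, N (i + 1) j = N i (j + 1)) :
    ∀ (m : ℕ) (i j : Fin n), N (i + m) j = N i (j + m) := by
  intro m
  induction m with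
  | zero => simp
  | succ m ih =>
    intro i j
    have hc : ((m + 1 : ℕ) : Fin n) = (m : Fin n) + 1 := by push_cast; ring
    rw [hc, ← add_assoc, h, ih, add_assoc, add_comm (1 : Fin n)]

lemma shiftrel_iff (N : Matrix (Fin n) (Fin n) ℝ) :
    cyclicShift n * N = N * (cyclicShift n)ᵀ ↔ IsCyclicHankel N := by
  constructor
  · intro h
    have h' : ∀ i j : Fin n, N (i + 1) j = N i (j + 1) := by
      intro i j
      have := congrFun (congrFun h i) j
      rwa [shift_mul, mul_shiftT] at this
    have key : ∀ i j : Fin n, N i j = N 0 (i + j) := by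
      intro i j
      have := rel_shift h' i.val 0 j
      simpa [Fin.cast_val_eq_self, add_comm] using this
    intro i j i' j' hij
    rw [key i j, hij, ← key]
  · intro h
    ext i j
    rw [shift_mul, mul_shiftT]
    exact h _ _ _ _ (by ring)

lemma hankel_symm {N : Matrix (Fin n) (Fin n) ℝ} (h : IsCyclicHankel N) : Nᵀ = N := by
  ext i j; exact h j i i j (add_comm j i)

/-- blocks extraction -/
lemma hess_blocks {M : Matrix (Fin n ⊕ Fin n) (Fin n ⊕ Fin n) ℝ}
    (hsym : Mᵀ = M) (hrel : shiftBlock n * M = M * (shiftBlock n)ᵀ) :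
    IsCyclicHankel M.toBlocks₁₁ ∧ IsCyclicHankel M.toBlocks₁₂ ∧
    IsCyclicHankel M.toBlocks₂₂ ∧ M.toBlocks₂₁ = M.toBlocks₁₂ := by
  rw [← fromBlocks_toBlocks M] at hrel
  rw [shiftBlock, fromBlocks_transpose, transpose_zero, fromBlocks_multiply,
    fromBlocks_multiply] at hrel
  simp only [Matrix.zero_mul, Matrix.mul_zero, add_zero, zero_add] at hrel
  rw [fromBlocks_inj] at hrel
  obtain ⟨h11, h12, h21, h22⟩ := hrel
  have hb21 : M.toBlocks₂₁ = M.toBlocks₁₂ᵀ := by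
    ext i j
    have := congrFun (congrFun hsym (Sum.inr i)) (Sum.inl j)
    simpa [toBlocks₂₁, toBlocks₁₂] using this.symm
  refine ⟨(shiftrel_iff _).1 h11, (shiftrel_iff _).1 h12, (shiftrel_iff _).1 h22, ?_⟩
  rw [hb21, hankel_symm ((shiftrel_iff _).1 h12)]

lemma hess_mem {H1 H2 H3 : Matrix (Fin n) (Fin n) ℝ}
    (h1 : IsCyclicHankel H1) (h2 : IsCyclicHankel H2) (h3 : IsCyclicHankel H3) :
    (fromBlocks H1 H2 H2 H3)ᵀ = fromBlocks H1 H2 H2 H3 ∧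
    shiftBlock n * fromBlocks H1 H2 H2 H3 = fromBlocks H1 H2 H2 H3 * (shiftBlock n)ᵀ := by
  constructor
  · rw [fromBlocks_transpose, hankel_symm h1, hankel_symm h2, hankel_symm h3]
  · rw [shiftBlock, fromBlocks_transpose, transpose_zero, fromBlocks_multiply,
      fromBlocks_multiply]
    simp only [Matrix.zero_mul, Matrix.mul_zero, add_zero, zero_add]
    rw [fromBlocks_inj]
    exact ⟨(shiftrel_iff _).2 h1, (shiftrel_iff _).2 h2, (shiftrel_iff _).2 h2,
      (shiftrel_iff _).2 h3⟩

end Aux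

section Aux2
variable {n : ℕ} [NeZero n]

def hank (a : Fin n → ℝ) : Matrix (Fin n) (Fin n) ℝ := Matrix.of fun i j => a (i + j)

lemma hank_hankel (a : Fin n → ℝ) : IsCyclicHankel (hank a) :=
  fun i j i' j' h => by simp only [hank, Matrix.of_apply, h]

noncomputable def hessEquiv (n : ℕ) [NeZero n] :
    hessSpace n ≃ₗ[ℝ] (Fin n → ℝ) × (Fin n → ℝ) × (Fin n → ℝ) where
  toFun M := (fun s => M.1 (.inl 0) (.inl s), fun s => M.1 (.inl 0) (.inr s),
      fun s => M.1 (.inr 0) (.inr s))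
  map_add' := fun _ _ => rfl
  map_smul' := fun _ _ => rfl
  invFun t := ⟨fromBlocks (hank t.1) (hank t.2.1) (hank t.2.1) (hank t.2.2),
    (hess_mem (hank_hankel _) (hank_hankel _) (hank_hankel _)).1,
    (hess_mem (hank_hankel _) (hank_hankel _) (hank_hankel _)).2⟩
  left_inv := by
    rintro ⟨M, hsym, hrel⟩
    obtain ⟨h11, h12, h22, h21⟩ := hess_blocks hsym hrel
    apply Subtype.ext
    ext i j
    cases i with
    | inl i =>
      cases j with
      | inl j =>
        show M (.inl 0) (.inl (i + j)) = M (.inl i) (.inl j)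
        exact (h11 i j 0 (i + j) (zero_add _).symm).symm
      | inr j =>
        show M (.inl 0) (.inr (i + j)) = M (.inl i) (.inr j)
        exact (h12 i j 0 (i + j) (zero_add _).symm).symm
    | inr i =>
      cases j with
      | inl j =>
        show M (.inl 0) (.inr (i + j)) = M (.inr i) (.inl j)
        have e1 : M (.inr i) (.inl j) = M (.inl i) (.inr j) := congrFun (congrFun h21 i) j
        rw [e1]
        exact (h12 i j 0 (i + j) (zero_add _).symm).symm
      | inr j =>
        show M (.inr 0) (.inr (i + j)) = M (.inr i) (.inr j)
        exact (h22 i j 0 (i + j) (zero_add _).symm).symm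
  right_inv := by
    rintro ⟨a, b, c⟩
    refine Prod.ext ?_ (Prod.ext ?_ ?_) <;> funext s
    · show hank a 0 s = a s
      simp [hank]
    · show hank b 0 s = b s
      simp [hank]
    · show hank c 0 s = c s
      simp [hank]

end Aux2

/-- A symmetric matrix `M` (the Hessian of a quadratic form) satisfies
`A M = M Aᵀ` with `A = P ⊕ P` iff `M = [[H1, H2],[H2, H3]]` with cyclic Hankel
blocks; the space of such `M` has dimension `3n`. -/
theorem hess_characterization (n : ℕ) [NeZero n] :
    (∀ M : Matrix (Fin n ⊕ Fin n) (Fin n ⊕ Fin n) ℝ, Mᵀ = M →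
      (shiftBlock n * M = M * (shiftBlock n)ᵀ ↔
        ∃ H1 H2 H3 : Matrix (Fin n) (Fin n) ℝ,
          IsCyclicHankel H1 ∧ IsCyclicHankel H2 ∧ IsCyclicHankel H3 ∧
          M = Matrix.fromBlocks H1 H2 H2 H3)) ∧
    Module.finrank ℝ (hessSpace n) = 3 * n := by
  constructor
  · intro M hsym
    constructor
    · intro hrel
      obtain ⟨h11, h12, h22, h21⟩ := hess_blocks hsym hrel
      refine ⟨M.toBlocks₁₁, M.toBlocks₁₂, M.toBlocks₂₂, h11, h12, h22, ?_⟩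
      conv_lhs => rw [← fromBlocks_toBlocks M]
      rw [h21]
    · rintro ⟨H1, H2, H3, h1, h2, h3, rfl⟩
      exact (hess_mem h1 h2 h3).2
  · rw [(hessEquiv n).finrank_eq, Module.finrank_prod, Module.finrank_prod,
      Module.finrank_fin_fun]
    ring
end

section
/- Let f(x) be a quadratic homogeneous vector field on ℝ^N with Kahan map x̃ = Φ_f(x,ε) = (I − ε f'(x))^{−1} x (assuming invertibility). Then the Jacobian of the map is dΦ_f(x) = (I − ε f'(x))^{−1} (I + ε f'(x̃)). -/
open Matrix

attribute [local instance] Matrix.linftyOpNormedAddCommGroup Matrix.linftyOpNormedSpace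
  Matrix.linftyOpNormedRing Matrix.linftyOpNormedAlgebra

/-- The Jacobian of the Kahan map of a homogeneous quadratic vector field:
for `Φ_f(x) = (I - ε f'(x))⁻¹ x` one has
`dΦ_f(x) = (I - ε f'(x))⁻¹ (I + ε f'(x̃))`, where `x̃ = Φ_f(x)`. -/
theorem kahan_jacobian {N : ℕ}
    (M : Fin N → Matrix (Fin N) (Fin N) ℝ)
    (hMsymm : ∀ i, (M i)ᵀ = M i)
    (f : (Fin N → ℝ) → (Fin N → ℝ))
    (hf : ∀ x i, f x i = x ⬝ᵥ (M i).mulVec x)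
    (Df : (Fin N → ℝ) → Matrix (Fin N) (Fin N) ℝ)
    (hDf : ∀ x, Df x = Matrix.of (fun i j => 2 * (M i).mulVec x j))
    (ε : ℝ)
    (Φ : (Fin N → ℝ) → (Fin N → ℝ))
    (hΦ : ∀ y, Φ y = (1 - ε • Df y)⁻¹.mulVec y)
    (x : Fin N → ℝ)
    (h1 : IsUnit (1 - ε • Df x)) :
    HasFDerivAt Φ
      ((((1 - ε • Df x)⁻¹ * (1 + ε • Df (Φ x))).mulVecLin).toContinuousLinearMap) x := by
  classical
  -- Df as a linear map
  have hDf_add : ∀ v w, Df (v + w) = Df v + Df w := by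
    intro v w
    ext i j
    simp [hDf, Matrix.mulVec_add, mul_add]
  have hDf_smul : ∀ (c : ℝ) v, Df (c • v) = c • Df v := by
    intro c v
    ext i j
    simp [hDf, Matrix.mulVec_smul]
    ring
  set DfL : (Fin N → ℝ) →ₗ[ℝ] Matrix (Fin N) (Fin N) ℝ :=
    { toFun := Df, map_add' := hDf_add, map_smul' := hDf_smul } with hDfL
  -- symmetry lemma
  have hsym : ∀ v w : Fin N → ℝ, (Df v).mulVec w = (Df w).mulVec v := by
    intro v w
    ext i
    have hexp : ∀ v w : Fin N → ℝ, ((Df v).mulVec w) i = 2 * ((M i).mulVec v ⬝ᵥ w) := by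
      intro v w
      simp only [hDf, Matrix.mulVec, dotProduct, Matrix.of_apply, Finset.mul_sum]
      exact Finset.sum_congr rfl fun j _ => by rw [← Finset.mul_sum]; ring
    have key : (M i).mulVec v ⬝ᵥ w = (M i).mulVec w ⬝ᵥ v := by
      rw [dotProduct_comm, Matrix.dotProduct_mulVec, ← Matrix.mulVec_transpose, hMsymm]
    rw [hexp, hexp, key]
  -- derivative of y ↦ 1 - ε • Df y
  have hA : HasFDerivAt (fun y : Fin N → ℝ => (1 : Matrix (Fin N) (Fin N) ℝ) - ε • Df y)
      (-(ε • DfL.toContinuousLinearMap)) x := by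
    have : HasFDerivAt (fun y : Fin N → ℝ => ε • Df y) (ε • DfL.toContinuousLinearMap) x := by
      exact ((ε • DfL.toContinuousLinearMap).hasFDerivAt (x := x))
    exact this.const_sub 1
  have hspec : (h1.unit : Matrix (Fin N) (Fin N) ℝ) = 1 - ε • Df x := h1.unit_spec
  have hinv0 : ((h1.unit⁻¹ : (Matrix (Fin N) (Fin N) ℝ)ˣ) : Matrix (Fin N) (Fin N) ℝ)
      = (1 - ε • Df x)⁻¹ := by
    rw [Matrix.nonsing_inv_eq_ringInverse]
    conv_rhs => rw [← hspec]
    exact (Ring.inverse_unit h1.unit).symm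
  have hinv := hasFDerivAt_ringInverse (𝕜 := ℝ) h1.unit
  rw [hspec] at hinv
  have hB := hinv.comp x hA
  -- bilinear map
  have isB : IsBoundedBilinearMap ℝ
      (fun p : Matrix (Fin N) (Fin N) ℝ × (Fin N → ℝ) => p.1.mulVec p.2) := by
    refine ⟨fun A B v => ?_, fun c A v => ?_, fun A v w => ?_, fun c A v => ?_, 1, one_pos, ?_⟩
    · exact Matrix.add_mulVec A B v
    · exact Matrix.smul_mulVec c A v
    · exact Matrix.mulVec_add A v w
    · exact (Matrix.mulVec_smul A c v)
    · intro A v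
      simpa using Matrix.linfty_opNorm_mulVec A v
  have hprod := HasFDerivAt.prodMk hB (hasFDerivAt_id x)
  have hbil : HasFDerivAt (fun p : Matrix (Fin N) (Fin N) ℝ × (Fin N → ℝ) => p.1 *ᵥ p.2)
      (isB.deriv (Ring.inverse ((1 : Matrix (Fin N) (Fin N) ℝ) - ε • Df x), x))
      ((fun y : Fin N → ℝ => (Ring.inverse ((1 : Matrix (Fin N) (Fin N) ℝ) - ε • Df y), y)) x) :=
    isB.hasFDerivAt _
  have hg : HasFDerivAt
      (fun y : Fin N → ℝ => (Ring.inverse ((1 : Matrix (Fin N) (Fin N) ℝ) - ε • Df y)).mulVec y)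
      ((isB.deriv (Ring.inverse ((1 : Matrix (Fin N) (Fin N) ℝ) - ε • Df x), x)).comp
        ((((-(ContinuousLinearMap.mulLeftRight ℝ (Matrix (Fin N) (Fin N) ℝ)
              (h1.unit⁻¹ : (Matrix (Fin N) (Fin N) ℝ)ˣ))) ((h1.unit⁻¹ : (Matrix (Fin N) (Fin N) ℝ)ˣ) :
                Matrix (Fin N) (Fin N) ℝ)).comp
            (-(ε • DfL.toContinuousLinearMap))).prod (ContinuousLinearMap.id ℝ (Fin N → ℝ)))) x :=
    HasFDerivAt.comp
      (f := fun y : Fin N → ℝ => (Ring.inverse ((1 : Matrix (Fin N) (Fin N) ℝ) - ε • Df y), y))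
      (g := fun p : Matrix (Fin N) (Fin N) ℝ × (Fin N → ℝ) => p.1 *ᵥ p.2)
      x hbil hprod
  have hΦeq : Φ = fun y => (Ring.inverse ((1 : Matrix (Fin N) (Fin N) ℝ) - ε • Df y)).mulVec y := by
    funext y; rw [hΦ, Matrix.nonsing_inv_eq_ringInverse]
  rw [hΦeq]
  convert hg using 1
  · rfl
  · rfl
  refine ContinuousLinearMap.ext fun h => ?_
  simp only [ContinuousLinearMap.coe_comp', Function.comp_apply, ContinuousLinearMap.prod_apply,
    ContinuousLinearMap.coe_id', id_eq, IsBoundedBilinearMap.deriv_apply,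
    ContinuousLinearMap.neg_apply, ContinuousLinearMap.smul_apply,
    LinearMap.coe_toContinuousLinearMap', Matrix.mulVecLin_apply,
    ContinuousLinearMap.mulLeftRight_apply, hinv0]
  rw [← Matrix.nonsing_inv_eq_ringInverse]
  simp only [hDfL, LinearMap.coe_mk, AddHom.coe_mk, mul_neg, neg_mul, neg_neg, mul_add, mul_one,
    Matrix.add_mulVec, ← Matrix.mulVec_mulVec, Matrix.smul_mulVec]
  rw [hsym ((1 - ε • Df x)⁻¹ *ᵥ x) h]
  show _ = _ + (-(((1 - ε • Df x)⁻¹) * (-(ε • Df h)) * (1 - ε • Df x)⁻¹)) *ᵥ x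
  simp [Matrix.mulVec_mulVec, Matrix.mul_assoc, Matrix.smul_mulVec]
  simp only [Matrix.smul_mulVec, Matrix.mulVec_smul, ← Matrix.mulVec_mulVec]
end

section
/- Let J(x) be the 2n×2n Lie-Poisson tensor and ∇²H a Hessian with cyclic Hankel blocks as above. Then (J(x)∇²H)² is a polynomial in A = P ⊕ P: (J(x)∇²H)² = Σ_{ℓ=0}^{n−1} q_ℓ(x) A^ℓ, where q_ℓ(x) = (1/2n) tr((A^T)^ℓ (J(x)∇²H)²). -/
open Matrix

/- ### Auxiliary lemmas -/

open Fin.NatCast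

lemma hankel_mul_circulant {n : ℕ} [NeZero n] (M N : Matrix (Fin n) (Fin n) ℝ)
    (hM : IsCyclicHankel M) (hN : IsCyclicHankel N) :
    M * N = Matrix.circulant (fun d => ∑ m : Fin n, M 0 (d + m) * N 0 m) := by
  ext i k
  rw [Matrix.mul_apply, Matrix.circulant_apply]
  refine Fintype.sum_equiv (Equiv.addRight k) _ _ fun j => ?_
  have h1 : M i j = M 0 (i - k + (j + k)) := by
    apply hM; rw [zero_add]; abel
  have h2 : N j k = N 0 (j + k) := by
    apply hN; rw [zero_add]
  rw [h1, h2]; rfl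

lemma cyclicShift_pow {n : ℕ} [NeZero n] (ℓ : ℕ) :
    cyclicShift n ^ ℓ = Matrix.of fun i j => if j = i + (ℓ : Fin n) then (1 : ℝ) else 0 := by
  induction ℓ with
  | zero =>
      ext i j
      simp [Matrix.one_apply, eq_comm]
  | succ ℓ ih =>
      rw [pow_succ, ih]
      ext i j
      rw [Matrix.mul_apply]
      simp only [Matrix.of_apply, cyclicShift]
      rw [Finset.sum_eq_single (i + (ℓ : Fin n))]
      · rw [if_pos rfl, one_mul]
        have hcast : ((ℓ + 1 : ℕ) : Fin n) = (ℓ : Fin n) + 1 := by push_cast; ring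
        rw [hcast, ← add_assoc]
      · intro b _ hb
        rw [if_neg (by exact fun h => hb h), zero_mul]
      · simp

lemma diagBlock_pow {n : ℕ} (A B : Matrix (Fin n) (Fin n) ℝ) (ℓ : ℕ) :
    (Matrix.fromBlocks A 0 0 B) ^ ℓ = Matrix.fromBlocks (A ^ ℓ) 0 0 (B ^ ℓ) := by
  induction ℓ with
  | zero => simp [Matrix.fromBlocks_one]
  | succ ℓ ih => rw [pow_succ, ih, Matrix.fromBlocks_multiply]; simp [pow_succ]

lemma trace_shiftT_pow_circulant {n : ℕ} [NeZero n] (b : Fin n → ℝ) (ℓ : ℕ) :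
    (((cyclicShift n) ^ ℓ)ᵀ * Matrix.circulant b).trace = n * b (-(ℓ : Fin n)) := by
  rw [Matrix.trace]
  have hdiag : ∀ i : Fin n, (((cyclicShift n) ^ ℓ)ᵀ * Matrix.circulant b) i i
      = b (-(ℓ : Fin n)) := by
    intro i
    rw [Matrix.mul_apply]
    rw [Finset.sum_eq_single (i - (ℓ : Fin n))]
    · rw [Matrix.transpose_apply, cyclicShift_pow]
      simp only [Matrix.of_apply, Matrix.circulant_apply]
      rw [if_pos (by abel), one_mul]
      congr 1
      abel
    · intro j _ hj
      rw [Matrix.transpose_apply, cyclicShift_pow]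
      simp only [Matrix.of_apply]
      rw [if_neg, zero_mul]
      intro h
      apply hj
      rw [h]; abel
    · simp
  simp only [Matrix.diag_apply, hdiag]
  rw [Finset.sum_const, Finset.card_univ, Fintype.card_fin, nsmul_eq_mul]

lemma circulant_eq_sum_shift {n : ℕ} [NeZero n] (b : Fin n → ℝ) :
    Matrix.circulant b =
      ∑ ℓ ∈ Finset.range n, b (-(ℓ : Fin n)) • cyclicShift n ^ ℓ := by
  rw [← Fin.sum_univ_eq_sum_range (fun ℓ : ℕ => b (-(ℓ : Fin n)) • cyclicShift n ^ ℓ) n]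
  ext i j
  rw [Matrix.circulant_apply, Matrix.sum_apply]
  rw [Finset.sum_eq_single (j - i)]
  · rw [Matrix.smul_apply, cyclicShift_pow]
    simp only [Matrix.of_apply, Fin.cast_val_eq_self]
    rw [if_pos (by abel), smul_eq_mul, mul_one]
    congr 1
    abel
  · intro ℓ _ hℓ
    rw [Matrix.smul_apply, cyclicShift_pow]
    simp only [Matrix.of_apply, Fin.cast_val_eq_self]
    rw [if_neg, smul_zero]
    intro h
    apply hℓ
    rw [h]; abel
  · simp

/-- The key block identity, for an arbitrary circulant matrix placed on both
diagonal blocks. -/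
lemma key_block {n : ℕ} [NeZero n] (b : Fin n → ℝ) :
    Matrix.fromBlocks (Matrix.circulant b) 0 0 (Matrix.circulant b) =
      ∑ ℓ ∈ Finset.range n,
        ((1 / (2 * (n : ℝ))) *
          (((shiftBlock n)ᵀ ^ ℓ *
            Matrix.fromBlocks (Matrix.circulant b) 0 0 (Matrix.circulant b)).trace)) •
          (shiftBlock n) ^ ℓ := by
  have hn : (n : ℝ) ≠ 0 := Nat.cast_ne_zero.mpr (NeZero.ne n)
  have htr : ∀ ℓ : ℕ,
      ((shiftBlock n)ᵀ ^ ℓ *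
        Matrix.fromBlocks (Matrix.circulant b) 0 0 (Matrix.circulant b)).trace
      = 2 * n * b (-(ℓ : Fin n)) := by
    intro ℓ
    rw [shiftBlock, Matrix.fromBlocks_transpose, Matrix.transpose_zero, diagBlock_pow,
      Matrix.fromBlocks_multiply]
    simp only [Matrix.mul_zero, Matrix.zero_mul, add_zero, zero_add]
    rw [Matrix.trace]
    rw [Fintype.sum_sum_type]
    simp only [Matrix.diag_apply, Matrix.fromBlocks_apply₁₁, Matrix.fromBlocks_apply₂₂,
      ← Matrix.transpose_pow]
    have := trace_shiftT_pow_circulant b ℓ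
    rw [Matrix.trace] at this
    simp only [Matrix.diag_apply] at this
    rw [this]
    ring
  have hcoef : ∀ ℓ : ℕ,
      (1 / (2 * (n : ℝ))) *
        (((shiftBlock n)ᵀ ^ ℓ *
          Matrix.fromBlocks (Matrix.circulant b) 0 0 (Matrix.circulant b)).trace)
      = b (-(ℓ : Fin n)) := by
    intro ℓ
    rw [htr ℓ]
    field_simp
  calc Matrix.fromBlocks (Matrix.circulant b) 0 0 (Matrix.circulant b)
      = ∑ ℓ ∈ Finset.range n, b (-(ℓ : Fin n)) • (shiftBlock n) ^ ℓ := by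
        rw [circulant_eq_sum_shift b]
        ext (i | i) (j | j) <;>
          simp [shiftBlock, diagBlock_pow, Matrix.sum_apply]
    _ = _ := by
        refine Finset.sum_congr rfl fun ℓ _ => ?_
        rw [hcoef ℓ]

/-- `(J(x) ∇²H)²` is a polynomial in `A = P ⊕ P`:
`(J(x)∇²H)² = Σ_{ℓ<n} q_ℓ(x) A^ℓ` with
`q_ℓ(x) = (1/2n) tr((Aᵀ)^ℓ (J(x)∇²H)²)`. -/
theorem LP_square_polynomial {n : ℕ} [NeZero n]
    (H1 H2 H3 : Matrix (Fin n) (Fin n) ℝ)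
    (h1 : IsCyclicHankel H1) (h2 : IsCyclicHankel H2) (h3 : IsCyclicHankel H3)
    (x : Fin n ⊕ Fin n → ℝ) :
    (LPtensor x * Matrix.fromBlocks H1 H2 H2 H3) ^ 2 =
      ∑ ℓ ∈ Finset.range n,
        ((1 / (2 * (n : ℝ))) *
          (((shiftBlock n)ᵀ ^ ℓ *
            (LPtensor x * Matrix.fromBlocks H1 H2 H2 H3) ^ 2).trace)) •
          (shiftBlock n) ^ ℓ := by
  set X := cycHankel (x ∘ Sum.inl) with hXdef
  have hX : IsCyclicHankel X := by
    intro i j i' j' h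
    simp only [hXdef, cycHankel, Matrix.of_apply]
    rw [h]
  set c := fun d => ∑ m : Fin n, X 0 (d + m) * H2 0 m with hc
  set d := fun dd => ∑ m : Fin n, X 0 (dd + m) * H3 0 m with hd
  set e := fun dd => ∑ m : Fin n, X 0 (dd + m) * H1 0 m with he
  have hC : X * H2 = Matrix.circulant c := hankel_mul_circulant X H2 hX h2
  have hD : X * H3 = Matrix.circulant d := hankel_mul_circulant X H3 hX h3
  have hE : X * H1 = Matrix.circulant e := hankel_mul_circulant X H1 hX h1
  have hM : LPtensor x * Matrix.fromBlocks H1 H2 H2 H3 =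
      Matrix.fromBlocks (Matrix.circulant c) (Matrix.circulant d)
        (-(Matrix.circulant e)) (-(Matrix.circulant c)) := by
    rw [LPtensor, Matrix.fromBlocks_multiply]
    simp only [Matrix.zero_mul, Matrix.neg_mul, zero_add, add_zero, ← hXdef]
    rw [hC, hD, hE]
  set b := Matrix.circulant c *ᵥ c - Matrix.circulant d *ᵥ e with hb
  have hsq : (LPtensor x * Matrix.fromBlocks H1 H2 H2 H3) ^ 2 =
      Matrix.fromBlocks (Matrix.circulant b) 0 0 (Matrix.circulant b) := by
    rw [sq, hM, Matrix.fromBlocks_multiply]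
    have hcirc_sub : Matrix.circulant (Matrix.circulant c *ᵥ c)
        - Matrix.circulant (Matrix.circulant d *ᵥ e) = Matrix.circulant b := by
      ext i j
      simp [hb, Matrix.circulant_apply, Matrix.sub_apply]
    have hB11 : Matrix.circulant c * Matrix.circulant c
        + Matrix.circulant d * -Matrix.circulant e = Matrix.circulant b := by
      rw [Matrix.mul_neg, ← sub_eq_add_neg, Matrix.circulant_mul, Matrix.circulant_mul,
        hcirc_sub]
    have hB12 : Matrix.circulant c * Matrix.circulant d
        + Matrix.circulant d * -Matrix.circulant c = 0 := by
      rw [Matrix.mul_neg, ← sub_eq_add_neg, Matrix.circulant_mul_comm c d, sub_self]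
    have hB21 : -Matrix.circulant e * Matrix.circulant c
        + -Matrix.circulant c * -Matrix.circulant e = 0 := by
      rw [Matrix.neg_mul, Matrix.neg_mul, Matrix.mul_neg, neg_neg, ← sub_eq_neg_add,
        Matrix.circulant_mul_comm c e, sub_self]
    have hB22 : -Matrix.circulant e * Matrix.circulant d
        + -Matrix.circulant c * -Matrix.circulant c = Matrix.circulant b := by
      rw [Matrix.neg_mul, Matrix.neg_mul, Matrix.mul_neg, neg_neg, ← sub_eq_neg_add,
        Matrix.circulant_mul_comm e d, Matrix.circulant_mul, Matrix.circulant_mul,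
        hcirc_sub]
    rw [hB11, hB12, hB21, hB22]
  rw [hsq]
  exact key_block b
end

section
/- In dimension 4 (n = 2), with J(x) the Lie-Poisson tensor built from X(u) = [[x_1, x_2],[x_2, x_1]] and ∇²H = [[h1,h2,h3,h4],[h2,h1,h4,h3],[h3,h4,h5,h6],[h4,h3,h6,h5]], one has (J(x)∇²H)² = q_0(x) I + q_1(x) A where A = [[0,1,0,0],[1,0,0,0],[0,0,0,1],[0,0,1,0]], q_0(x) = α(x_1² + x_2²) + 2β x_1 x_2, q_1(x) = β(x_1² + x_2²) + 2α x_1 x_2, with α = h3² + h4² − h1 h5 − h2 h6 and β = 2 h3 h4 − h1 h6 − h2 h5; moreover ∇q_1 = A ∇q_0. -/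
set_option maxHeartbeats 1600000


open Matrix

lemma fd_quad (c d : ℝ) (y v : Fin 4 → ℝ) :
    fderiv ℝ (fun y : Fin 4 → ℝ => c * (y 0 ^ 2 + y 1 ^ 2) + 2 * d * y 0 * y 1) y v
      = c * (2 * y 0 * v 0 + 2 * y 1 * v 1) + 2 * d * (v 0 * y 1 + y 0 * v 1) := by
  have h0 := hasFDerivAt_apply (𝕜 := ℝ) (F' := fun _ : Fin 4 => ℝ) 0 y
  have h1 := hasFDerivAt_apply (𝕜 := ℝ) (F' := fun _ : Fin 4 => ℝ) 1 y
  have H := (((h0.mul h0).add (h1.mul h1)).const_mul c).add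
    ((h0.const_mul (2 * d)).mul h1)
  have hfun : (fun y : Fin 4 → ℝ => c * (y 0 ^ 2 + y 1 ^ 2) + 2 * d * y 0 * y 1)
      = fun y : Fin 4 → ℝ => c * (y 0 * y 0 + y 1 * y 1) + 2 * d * y 0 * y 1 := by
    funext y; ring
  rw [hfun, (show HasFDerivAt (fun y : Fin 4 → ℝ => c * (y 0 * y 0 + y 1 * y 1) + 2 * d * y 0 * y 1) _ y from H).fderiv]
  simp [ContinuousLinearMap.proj_apply]
  ring

/-- The 4-dimensional (n = 2) case: explicit form of `(J(x)∇²H)²` and the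
gradient relation `∇q₁ = A ∇q₀`. -/
theorem dim4_example (x1 x2 h1 h2 h3 h4 h5 h6 α β : ℝ)
    (hα : α = h3 ^ 2 + h4 ^ 2 - h1 * h5 - h2 * h6)
    (hβ : β = 2 * h3 * h4 - h1 * h6 - h2 * h5)
    (J : Matrix (Fin 4) (Fin 4) ℝ)
    (hJ : J = !![0, 0, x1, x2; 0, 0, x2, x1; -x1, -x2, 0, 0; -x2, -x1, 0, 0])
    (M : Matrix (Fin 4) (Fin 4) ℝ)
    (hM : M = !![h1, h2, h3, h4; h2, h1, h4, h3; h3, h4, h5, h6; h4, h3, h6, h5])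
    (A : Matrix (Fin 4) (Fin 4) ℝ)
    (hA : A = !![0, 1, 0, 0; 1, 0, 0, 0; 0, 0, 0, 1; 0, 0, 1, 0])
    (q0 q1 : (Fin 4 → ℝ) → ℝ)
    (hq0 : ∀ y : Fin 4 → ℝ, q0 y = α * (y 0 ^ 2 + y 1 ^ 2) + 2 * β * y 0 * y 1)
    (hq1 : ∀ y : Fin 4 → ℝ, q1 y = β * (y 0 ^ 2 + y 1 ^ 2) + 2 * α * y 0 * y 1) :
    (J * M) ^ 2 =
      (α * (x1 ^ 2 + x2 ^ 2) + 2 * β * x1 * x2) • (1 : Matrix (Fin 4) (Fin 4) ℝ) +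
      (β * (x1 ^ 2 + x2 ^ 2) + 2 * α * x1 * x2) • A ∧
    (∀ (y v : Fin 4 → ℝ), fderiv ℝ q1 y v = fderiv ℝ q0 y (Aᵀ.mulVec v)) := by
  constructor
  · subst hα hβ hJ hM hA
    rw [pow_two]
    ext i j
    fin_cases i <;> fin_cases j <;>
      simp [Matrix.mul_apply, Fin.sum_univ_four, Matrix.one_apply, Matrix.vecHead, Matrix.vecTail] <;> ring
  · intro y v
    have hq0' : q0 = fun y : Fin 4 → ℝ =>
        α * (y 0 ^ 2 + y 1 ^ 2) + 2 * β * y 0 * y 1 := funext hq0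
    have hq1' : q1 = fun y : Fin 4 → ℝ =>
        β * (y 0 ^ 2 + y 1 ^ 2) + 2 * α * y 0 * y 1 := funext hq1
    rw [hq0', hq1', fd_quad, fd_quad]
    have hv0 : Aᵀ.mulVec v 0 = v 1 := by
      subst hA; simp [Matrix.mulVec, dotProduct, Fin.sum_univ_succ, Matrix.vecHead, Matrix.vecTail]
    have hv1 : Aᵀ.mulVec v 1 = v 0 := by
      subst hA; simp [Matrix.mulVec, dotProduct, Fin.sum_univ_succ, Matrix.vecHead, Matrix.vecTail]
    rw [hv0, hv1]
    ring
end
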